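/- For all (α,β) with sin β ≠ 0, the quaternion-valued derivatives of ι(α,β) satisfy: (1) ι_β⁻¹·∂(ι_β⁻¹)/∂β = −ι·ι_β⁻¹; (2) (ι_β⁻¹)² = −1; (3) (ι_α⁻¹)² = −1/sin²β; (4) ι_α⁻¹·∂(ι_β⁻¹)/∂α = −cot β. -/

import Mathlib

open Quaternion

noncomputable section

/-- `ι(α,β) = cos α sin β · i + sin α sin β · j + cos β · k`, a unit imaginary quaternion. -/
def iota (α β : ℝ) : ℍ[ℝ] :=
  ⟨0, Real.cos α * Real.sin β, Real.sin α * Real.sin β, Real.cos β⟩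
/-- `ι_α = ∂ι/∂α`. -/
def iotaA (α β : ℝ) : ℍ[ℝ] := deriv (fun a => iota a β) α
/-- `ι_β = ∂ι/∂β`. -/
def iotaB (α β : ℝ) : ℍ[ℝ] := deriv (fun b => iota α b) β

/-- Partial derivative in `α` of a quaternion-valued function of `(α,β)`. -/
def pA (g : ℝ → ℝ → ℍ[ℝ]) (α β : ℝ) : ℍ[ℝ] := deriv (fun a => g a β) α
/-- Partial derivative in `β` of a quaternion-valued function of `(α,β)`. -/
def pB (g : ℝ → ℝ → ℍ[ℝ]) (α β : ℝ) : ℍ[ℝ] := deriv (fun b => g α b) β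
/-- The left angular derivative `∂g/∂ιₗ := ι_α⁻¹ (∂g/∂α) + ι_β⁻¹ (∂g/∂β)`. -/
def DI (g : ℝ → ℝ → ℍ[ℝ]) (α β : ℝ) : ℍ[ℝ] :=
  (iotaA α β)⁻¹ * pA g α β + (iotaB α β)⁻¹ * pB g α β

def qmk (w x y z : ℝ) : ℍ[ℝ] := ⟨w, x, y, z⟩

@[simp] lemma qmk_re (w x y z : ℝ) : (qmk w x y z).re = w := rfl
@[simp] lemma qmk_imI (w x y z : ℝ) : (qmk w x y z).imI = x := rfl
@[simp] lemma qmk_imJ (w x y z : ℝ) : (qmk w x y z).imJ = y := rfl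
@[simp] lemma qmk_imK (w x y z : ℝ) : (qmk w x y z).imK = z := rfl

lemma coe_qmk (r : ℝ) : ((r : ℝ) : ℍ[ℝ]) = qmk r 0 0 0 := by
  ext <;> simp [qmk]

lemma hasDerivAt_quat {w x y z : ℝ → ℝ} {w' x' y' z' t : ℝ}
    (hw : HasDerivAt w w' t) (hx : HasDerivAt x x' t)
    (hy : HasDerivAt y y' t) (hz : HasDerivAt z z' t) :
    HasDerivAt (fun s => qmk (w s) (x s) (y s) (z s)) (qmk w' x' y' z') t := by
  have e : (fun s => qmk (w s) (x s) (y s) (z s))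
      = fun s => w s • qmk 1 0 0 0 + x s • qmk 0 1 0 0 + y s • qmk 0 0 1 0 + z s • qmk 0 0 0 1 := by
    funext s; ext <;> simp [qmk_re, qmk_imI, qmk_imJ, qmk_imK]
  rw [e]
  have := (((hw.smul_const (qmk 1 0 0 0)).add (hx.smul_const (qmk 0 1 0 0))).add
    (hy.smul_const (qmk 0 0 1 0))).add (hz.smul_const (qmk 0 0 0 1))
  exact this.congr_deriv (by ext <;> simp [qmk_re, qmk_imI, qmk_imJ, qmk_imK])

lemma iotaB_eq (α b : ℝ) :
    iotaB α b = qmk 0 (Real.cos α * Real.cos b) (Real.sin α * Real.cos b) (-Real.sin b) := by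
  have h : HasDerivAt (fun s => iota α s)
      (qmk 0 (Real.cos α * Real.cos b) (Real.sin α * Real.cos b) (-Real.sin b)) b := by
    have : (fun s => iota α s)
        = fun s => qmk 0 (Real.cos α * Real.sin s) (Real.sin α * Real.sin s) (Real.cos s) := rfl
    rw [this]
    exact hasDerivAt_quat (hasDerivAt_const _ _)
      ((Real.hasDerivAt_sin b).const_mul _) ((Real.hasDerivAt_sin b).const_mul _)
      (Real.hasDerivAt_cos b)
  exact h.deriv

lemma iotaA_eq (a β : ℝ) :
    iotaA a β = qmk 0 (-Real.sin a * Real.sin β) (Real.cos a * Real.sin β) 0 := by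
  have h : HasDerivAt (fun s => iota s β)
      (qmk 0 (-Real.sin a * Real.sin β) (Real.cos a * Real.sin β) 0) a := by
    have : (fun s => iota s β)
        = fun s => qmk 0 (Real.cos s * Real.sin β) (Real.sin s * Real.sin β) (Real.cos β) := rfl
    rw [this]
    exact hasDerivAt_quat (hasDerivAt_const _ _)
      ((Real.hasDerivAt_cos a).mul_const _) ((Real.hasDerivAt_sin a).mul_const _)
      (hasDerivAt_const _ _)
  exact h.deriv

lemma normSq_iotaB (α b : ℝ) : normSq (iotaB α b) = 1 := by
  rw [iotaB_eq]
  simp only [Quaternion.normSq_def', qmk_re, qmk_imI, qmk_imJ, qmk_imK]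
  nlinarith [Real.sin_sq_add_cos_sq α, Real.sin_sq_add_cos_sq b]

lemma invB_eq (α b : ℝ) :
    (iotaB α b)⁻¹ = qmk 0 (-(Real.cos α * Real.cos b)) (-(Real.sin α * Real.cos b)) (Real.sin b) := by
  rw [Quaternion.inv_def, normSq_iotaB, iotaB_eq]
  ext <;> simp [qmk_re, qmk_imI, qmk_imJ, qmk_imK]

/-- For `sin β ≠ 0`:
(1) `ι_β⁻¹ ∂(ι_β⁻¹)/∂β = -ι ι_β⁻¹`; (2) `(ι_β⁻¹)² = -1`; (3) `(ι_α⁻¹)² = -1/sin²β`;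
(4) `ι_α⁻¹ ∂(ι_β⁻¹)/∂α = -cot β`. -/
theorem iota_inv_identities (α β : ℝ) (h : Real.sin β ≠ 0) :
    (iotaB α β)⁻¹ * deriv (fun b => (iotaB α b)⁻¹) β = -(iota α β * (iotaB α β)⁻¹) ∧
    ((iotaB α β)⁻¹)^2 = -1 ∧
    ((iotaA α β)⁻¹)^2 = ((-(((Real.sin β)^2)⁻¹) : ℝ) : ℍ[ℝ]) ∧
    (iotaA α β)⁻¹ * deriv (fun a => (iotaB a β)⁻¹) α
      = ((-(Real.cos β / Real.sin β) : ℝ) : ℍ[ℝ]) := by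
  have hsa := Real.sin_sq_add_cos_sq α
  have hsb := Real.sin_sq_add_cos_sq β
  have hiota : iota α β = qmk 0 (Real.cos α * Real.sin β) (Real.sin α * Real.sin β) (Real.cos β) :=
    rfl
  -- derivative in β of the inverse
  have hdB : deriv (fun b => (iotaB α b)⁻¹) β
      = qmk 0 (Real.cos α * Real.sin β) (Real.sin α * Real.sin β) (Real.cos β) := by
    have e : (fun b => (iotaB α b)⁻¹)
        = fun b => qmk 0 (-(Real.cos α * Real.cos b)) (-(Real.sin α * Real.cos b)) (Real.sin b) := by
      funext b; exact invB_eq α b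
    rw [e]
    have hd : HasDerivAt
        (fun b => qmk 0 (-(Real.cos α * Real.cos b)) (-(Real.sin α * Real.cos b)) (Real.sin b))
        (qmk 0 (Real.cos α * Real.sin β) (Real.sin α * Real.sin β) (Real.cos β)) β := by
      have h1 : HasDerivAt (fun b => -(Real.cos α * Real.cos b)) (Real.cos α * Real.sin β) β := by
        have := ((Real.hasDerivAt_cos β).const_mul (Real.cos α)).neg
        simpa [Pi.neg_def] using this
      have h2 : HasDerivAt (fun b => -(Real.sin α * Real.cos b)) (Real.sin α * Real.sin β) β := by
        have := ((Real.hasDerivAt_cos β).const_mul (Real.sin α)).neg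
        simpa [Pi.neg_def] using this
      exact hasDerivAt_quat (hasDerivAt_const _ _) h1 h2 (Real.hasDerivAt_sin β)
    exact hd.deriv
  -- derivative in α of the inverse
  have hdA : deriv (fun a => (iotaB a β)⁻¹)
      α = qmk 0 (Real.sin α * Real.cos β) (-(Real.cos α * Real.cos β)) 0 := by
    have e : (fun a => (iotaB a β)⁻¹)
        = fun a => qmk 0 (-(Real.cos a * Real.cos β)) (-(Real.sin a * Real.cos β)) (Real.sin β) := by
      funext a; exact invB_eq a β
    rw [e]
    have hd : HasDerivAt
        (fun a => qmk 0 (-(Real.cos a * Real.cos β)) (-(Real.sin a * Real.cos β)) (Real.sin β))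
        (qmk 0 (Real.sin α * Real.cos β) (-(Real.cos α * Real.cos β)) 0) α := by
      have h1 : HasDerivAt (fun a => -(Real.cos a * Real.cos β)) (Real.sin α * Real.cos β) α := by
        have := ((Real.hasDerivAt_cos α).mul_const (Real.cos β)).neg
        simpa [Pi.neg_def] using this
      have h2 : HasDerivAt (fun a => -(Real.sin a * Real.cos β)) (-(Real.cos α * Real.cos β)) α := by
        have := ((Real.hasDerivAt_sin α).mul_const (Real.cos β)).neg
        simpa [Pi.neg_def] using this
      exact hasDerivAt_quat (hasDerivAt_const _ _) h1 h2 (hasDerivAt_const _ _)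
    exact hd.deriv
  -- inverse of iotaA
  have hnA : normSq (iotaA α β) = Real.sin β ^ 2 := by
    rw [iotaA_eq]
    simp only [Quaternion.normSq_def', qmk_re, qmk_imI, qmk_imJ, qmk_imK]
    nlinarith
  have hinvA : (iotaA α β)⁻¹
      = qmk 0 (Real.sin α / Real.sin β) (-(Real.cos α / Real.sin β)) 0 := by
    rw [Quaternion.inv_def, hnA, iotaA_eq]
    ext <;> simp [qmk_re, qmk_imI, qmk_imJ, qmk_imK] <;> field_simp <;> ring
  refine ⟨?_, ?_, ?_, ?_⟩
  · rw [invB_eq, hdB, hiota]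
    ext <;> simp [qmk_re, qmk_imI, qmk_imJ, qmk_imK, Quaternion.re_mul, Quaternion.imI_mul, Quaternion.imJ_mul,
        Quaternion.imK_mul] <;>
      first
        | ring1
        | linear_combination (2 * Real.cos β * Real.sin β) * hsa
  · rw [sq, invB_eq]
    ext <;> simp [qmk_re, qmk_imI, qmk_imJ, qmk_imK, Quaternion.re_mul, Quaternion.imI_mul, Quaternion.imJ_mul,
        Quaternion.imK_mul] <;>
      first
        | ring1
        | linear_combination (-(Real.cos β ^ 2)) * hsa - hsb
  · rw [sq, hinvA, coe_qmk]
    ext <;> simp [qmk_re, qmk_imI, qmk_imJ, qmk_imK, Quaternion.re_mul, Quaternion.imI_mul, Quaternion.imJ_mul,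
        Quaternion.imK_mul] <;>
      first
        | ring1
        | (field_simp; linear_combination hsa)
        | (field_simp; linear_combination (1 - Real.sin β ^ 4) * hsa)
        | (field_simp; linear_combination (-1 : ℝ) * hsa)
        | (field_simp; linear_combination (-(Real.sin β ^ 4)) * hsa)
  · rw [hinvA, hdA, coe_qmk]
    ext <;> simp [qmk_re, qmk_imI, qmk_imJ, qmk_imK, Quaternion.re_mul, Quaternion.imI_mul, Quaternion.imJ_mul,
        Quaternion.imK_mul] <;>
      first
        | ring1
        | (field_simp; linear_combination Real.cos β * hsa)
        | (field_simp; linear_combination (Real.cos β * (1 - Real.sin β ^ 2)) * hsa)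
        | (field_simp; linear_combination (-(Real.cos β)) * hsa)
        | (field_simp; linear_combination (-(Real.cos β * Real.sin β ^ 2)) * hsa)
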